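/- arXiv:2404.06952 — 5 statements merged into one kernel-verified Lean document; each statement's English description precedes it below -/
import Mathlib

section
/- Let h ∈ ℂ^μ and β ∈ ℂ^n. Define the liftings h^⇑ = Σ_{k∈[μ]} h_k e_k^{nμ} ∈ ℂ^{nμ} and β^↑ = Σ_{k∈[n]} β_k e_{kμ}^{nμ} ∈ ℂ^{nμ}. Then the circular convolution h^⇑ ∗ β^↑ equals the vectorization of the tensor h ⊗ β, i.e., (h^⇑ ∗ β^↑)_{j + kμ} = h_j β_k for all j ∈ [μ], k ∈ [n]. -/
/-- Circular convolution in `ℂ^N` indexed by `ZMod N`. -/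
noncomputable def cconv {N : ℕ} [NeZero N] (u v : ZMod N → ℂ) : ZMod N → ℂ :=
  fun a => ∑ b : ZMod N, u b * v (a - b)

/-- Lifting `h^⇑ = ∑_{k ∈ [μ]} h_k e_k^{nμ} ∈ ℂ^{nμ}` of `h ∈ ℂ^μ`. -/
noncomputable def liftH (n : ℕ) {μ : ℕ} [NeZero n] [NeZero μ] (h : Fin μ → ℂ) :
    ZMod (n * μ) → ℂ :=
  ∑ k : Fin μ, h k • (Pi.single (((k : ℕ) : ZMod (n * μ))) (1 : ℂ) : ZMod (n * μ) → ℂ)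

/-- Lifting `β^↑ = ∑_{k ∈ [n]} β_k e_{kμ}^{nμ} ∈ ℂ^{nμ}` of `β ∈ ℂ^n`. -/
noncomputable def liftB {n : ℕ} (μ : ℕ) [NeZero n] [NeZero μ] (β : Fin n → ℂ) :
    ZMod (n * μ) → ℂ :=
  ∑ k : Fin n, β k • (Pi.single ((((k : ℕ) * μ : ℕ) : ZMod (n * μ))) (1 : ℂ) : ZMod (n * μ) → ℂ)

lemma liftH_apply {n μ : ℕ} [NeZero n] [NeZero μ] (h : Fin μ → ℂ) (x : ZMod (n * μ)) :
    liftH n h x = if hx : x.val < μ then h ⟨x.val, hx⟩ else 0 := by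
  have hle : μ ≤ n * μ := Nat.le_mul_of_pos_left μ (Nat.pos_of_ne_zero (NeZero.ne n))
  have key : ∀ i : Fin μ, x = ((i : ℕ) : ZMod (n * μ)) ↔ x.val = (i : ℕ) := by
    intro i
    constructor
    · rintro rfl; exact ZMod.val_cast_of_lt (lt_of_lt_of_le i.isLt hle)
    · intro hv
      apply ZMod.val_injective
      rw [hv, ZMod.val_cast_of_lt (lt_of_lt_of_le i.isLt hle)]
  unfold liftH
  rw [Finset.sum_apply]
  simp only [Pi.smul_apply, Pi.single_apply, smul_eq_mul, mul_ite, mul_one, mul_zero]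
  split_ifs with hx
  · rw [Finset.sum_eq_single ⟨x.val, hx⟩]
    · simp [key]
    · intro i _ hi
      rw [if_neg]
      rw [key]
      intro hv
      exact hi (by ext; simpa using hv.symm)
    · simp
  · apply Finset.sum_eq_zero
    intro i _
    rw [if_neg]
    rw [key]
    intro hv
    exact hx (hv ▸ i.isLt)

lemma liftB_apply {n μ : ℕ} [NeZero n] [NeZero μ] (β : Fin n → ℂ) (x : ZMod (n * μ)) :
    liftB μ β x = if hx : μ ∣ x.val then β ⟨x.val / μ, by
      exact Nat.div_lt_of_lt_mul (lt_of_lt_of_eq x.val_lt (Nat.mul_comm n μ))⟩ else 0 := by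
  have hμ : 0 < μ := Nat.pos_of_ne_zero (NeZero.ne μ)
  have key : ∀ i : Fin n, x = (((i : ℕ) * μ : ℕ) : ZMod (n * μ)) ↔ x.val = (i : ℕ) * μ := by
    intro i
    have hlt : (i : ℕ) * μ < n * μ := (Nat.mul_lt_mul_right hμ).mpr i.isLt
    constructor
    · rintro rfl; exact ZMod.val_cast_of_lt hlt
    · intro hv
      apply ZMod.val_injective
      rw [hv, ZMod.val_cast_of_lt hlt]
  unfold liftB
  rw [Finset.sum_apply]
  simp only [Pi.smul_apply, Pi.single_apply, smul_eq_mul, mul_ite, mul_one, mul_zero]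
  split_ifs with hx
  · have hlt : x.val / μ < n := by
      exact Nat.div_lt_of_lt_mul (lt_of_lt_of_eq x.val_lt (Nat.mul_comm n μ))
    rw [Finset.sum_eq_single ⟨x.val / μ, hlt⟩]
    · rw [if_pos]
      rw [key]
      simp [Nat.div_mul_cancel hx]
    · intro i _ hi
      rw [if_neg]
      rw [key]
      intro hv
      apply hi
      ext
      simp [hv, Nat.mul_div_cancel _ hμ]
    · simp
  · apply Finset.sum_eq_zero
    intro i _
    rw [if_neg]
    rw [key]
    intro hv
    exact hx ⟨i, by rw [hv, Nat.mul_comm]⟩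


/-- The circular convolution `h^⇑ ∗ β^↑` equals `vec(h ⊗ β)`:
its entry at index `j + kμ` equals `h_j β_k` for all `j ∈ [μ]`, `k ∈ [n]`. -/
theorem stmt1 {n μ : ℕ} [NeZero n] [NeZero μ] (h : Fin μ → ℂ) (β : Fin n → ℂ)
    (j : Fin μ) (k : Fin n) :
    cconv (liftH n h) (liftB μ β) ((((j : ℕ) + (k : ℕ) * μ : ℕ)) : ZMod (n * μ)) =
      h j * β k := by
  have hμ : 0 < μ := Nat.pos_of_ne_zero (NeZero.ne μ)
  have hn : 0 < n := Nat.pos_of_ne_zero (NeZero.ne n)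
  have hle : μ ≤ n * μ := Nat.le_mul_of_pos_left μ hn
  have haval : (((j : ℕ) + (k : ℕ) * μ : ℕ) : ZMod (n * μ)).val = (j : ℕ) + (k : ℕ) * μ := by
    apply ZMod.val_cast_of_lt
    calc (j : ℕ) + (k : ℕ) * μ < μ + (k : ℕ) * μ := by omega
    _ = ((k : ℕ) + 1) * μ := by ring
    _ ≤ n * μ := Nat.mul_le_mul_right μ (by omega)
  set a : ZMod (n * μ) := (((j : ℕ) + (k : ℕ) * μ : ℕ) : ZMod (n * μ)) with ha
  unfold cconv
  rw [Fintype.sum_eq_single (((j : ℕ) : ZMod (n * μ)))]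
  · have h1 : (((j : ℕ) : ZMod (n * μ))).val = (j : ℕ) :=
      ZMod.val_cast_of_lt (lt_of_lt_of_le j.isLt hle)
    have h2 : a - ((j : ℕ) : ZMod (n * μ)) = (((k : ℕ) * μ : ℕ) : ZMod (n * μ)) := by
      rw [ha]; push_cast; ring
    have h3 : ((((k : ℕ) * μ : ℕ)) : ZMod (n * μ)).val = (k : ℕ) * μ :=
      ZMod.val_cast_of_lt ((Nat.mul_lt_mul_right hμ).mpr k.isLt)
    rw [liftH_apply, liftB_apply, h2]
    rw [dif_pos (show (((j : ℕ) : ZMod (n * μ))).val < μ by rw [h1]; exact j.isLt)]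
    rw [dif_pos (show μ ∣ ((((k : ℕ) * μ : ℕ)) : ZMod (n * μ)).val by
      rw [h3]; exact ⟨k, Nat.mul_comm _ _⟩)]
    congr 1
    · exact congrArg h (Fin.ext (by simpa using h1))
    · exact congrArg β (Fin.ext (by simp only [h3]; exact Nat.mul_div_cancel _ hμ))
  · intro b hb
    rw [liftH_apply, liftB_apply]
    by_contra hne
    rw [dite_eq_ite] at hne
    -- extract conditions
    by_cases hb1 : b.val < μ
    · by_cases hb2 : μ ∣ (a - b).val
      · -- derive b = j, contradiction
        apply hb
        obtain ⟨m', hm'⟩ := hb2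
        have hsub : (a - b).val < n * μ := (a - b).val_lt
        have hm'lt : m' < n := by
          rw [hm'] at hsub
          by_contra hc
          push_neg at hc
          exact absurd hsub (by nlinarith)
        -- a = b + (a - b) as ZMod
        have heq : ((b.val + (a - b).val : ℕ) : ZMod (n * μ)) = a := by
          push_cast
          rw [ZMod.natCast_val, ZMod.natCast_val, ZMod.cast_id, ZMod.cast_id]
          ring
        have hval : (b.val + (a - b).val) % (n * μ) = (j : ℕ) + (k : ℕ) * μ := by
          have := congrArg ZMod.val heq
          rwa [ZMod.val_natCast, haval] at this
        have hlt : b.val + (a - b).val < n * μ := by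
          rw [hm']
          calc b.val + μ * m' < μ + μ * m' := by omega
          _ = μ * (m' + 1) := by ring
          _ ≤ μ * n := Nat.mul_le_mul_left μ (by omega)
          _ = n * μ := Nat.mul_comm _ _
        rw [Nat.mod_eq_of_lt hlt] at hval
        -- b.val + μ * m' = j + k * μ, both canonical
        rw [hm'] at hval
        have hbj : b.val = (j : ℕ) := by
          have := congrArg (· % μ) hval
          simpa [Nat.mul_comm, Nat.add_mul_mod_self_right, Nat.mod_eq_of_lt hb1,
            Nat.mod_eq_of_lt j.isLt] using this
        apply ZMod.val_injective
        rw [hbj, ZMod.val_cast_of_lt (lt_of_lt_of_le j.isLt hle)]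
      · exact hne (by rw [if_neg hb2, mul_zero])
    · exact hne (by rw [dif_neg hb1, zero_mul])
end

section
/- For h ∈ ℂ^μ and β_A, β_B ∈ ℂ^n, Alice's and Bob's secrets coincide: the pointwise product of the DFTs of vec(h ⊗ β_B) and vec(e_0^μ ⊗ β_A) equals the pointwise product of the DFTs of vec(h ⊗ β_A) and vec(e_0^μ ⊗ β_B), both being equal to the pointwise product (DFT of h^⇑)·(DFT of β_A^↑)·(DFT of β_B^↑) in ℂ^{nμ}. -/
/-- `vec(h ⊗ β) ∈ ℂ^{nμ}`, with entry `h_j β_k` at index `j + kμ`. -/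
noncomputable def vecT {n μ : ℕ} [NeZero n] [NeZero μ] (h : Fin μ → ℂ) (β : Fin n → ℂ) :
    ZMod (n * μ) → ℂ :=
  ∑ j : Fin μ, ∑ k : Fin n,
    (h j * β k) •
      (Pi.single ((((j : ℕ) + (k : ℕ) * μ : ℕ) : ZMod (n * μ))) (1 : ℂ) : ZMod (n * μ) → ℂ)

/-- Discrete Fourier transform on `ℂ^N`. -/
noncomputable def dft {N : ℕ} [NeZero N] (f : ZMod N → ℂ) : ZMod N → ℂ :=
  fun j => ∑ a : ZMod N,
    f a * Complex.exp (-2 * Real.pi * Complex.I * ((j.val : ℂ) * (a.val : ℂ)) / N)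

section Aux

variable {N : ℕ} [NeZero N]

/-- The base character value `E = exp(-2πi·j/N)`. -/
noncomputable def eChar (N : ℕ) [NeZero N] (j : ZMod N) : ℂ :=
  Complex.exp (-2 * Real.pi * Complex.I * (j.val : ℂ) / N)

lemma eChar_pow_N (j : ZMod N) : eChar N j ^ N = 1 := by
  have hN : (N : ℂ) ≠ 0 := Nat.cast_ne_zero.mpr (NeZero.ne N)
  rw [eChar, ← Complex.exp_nat_mul]
  have : (N : ℂ) * (-2 * Real.pi * Complex.I * (j.val : ℂ) / N)
      = ((-(j.val : ℤ) : ℤ) : ℂ) * (2 * Real.pi * Complex.I) := by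
    push_cast; field_simp
  rw [this, Complex.exp_int_mul_two_pi_mul_I]

lemma eChar_pow_mod (j : ZMod N) (a : ℕ) : eChar N j ^ (a % N) = eChar N j ^ a := by
  conv_rhs => rw [← Nat.mod_add_div a N]
  rw [pow_add, pow_mul, eChar_pow_N, one_pow, mul_one]

lemma exp_eq_pow (j : ZMod N) (m : ℕ) :
    Complex.exp (-2 * Real.pi * Complex.I * ((j.val : ℂ) * (m : ℂ)) / N)
      = eChar N j ^ m := by
  rw [eChar, ← Complex.exp_nat_mul]
  congr 1
  ring

lemma dft_single (c : ℕ) (j : ZMod N) :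
    dft (Pi.single ((c : ZMod N)) (1 : ℂ)) j = eChar N j ^ c := by
  rw [dft]
  rw [Finset.sum_eq_single ((c : ZMod N))]
  · rw [Pi.single_eq_same, one_mul, ZMod.val_natCast, exp_eq_pow, eChar_pow_mod]
  · intro b _ hb
    rw [Pi.single_eq_of_ne hb, zero_mul]
  · intro hmem; exact absurd (Finset.mem_univ _) hmem

lemma dft_sum {ι : Type*} (s : Finset ι) (F : ι → ZMod N → ℂ) (j : ZMod N) :
    dft (∑ i ∈ s, F i) j = ∑ i ∈ s, dft (F i) j := by
  simp only [dft, Finset.sum_apply, Finset.sum_mul]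
  exact Finset.sum_comm

lemma dft_smul (c : ℂ) (f : ZMod N → ℂ) (j : ZMod N) :
    dft (c • f) j = c * dft f j := by
  simp [dft, Finset.mul_sum, mul_assoc]

end Aux

lemma dft_vecT {n μ : ℕ} [NeZero n] [NeZero μ] (h : Fin μ → ℂ) (β : Fin n → ℂ) :
    dft (vecT h β) = dft (liftH n h) * dft (liftB μ β) := by
  funext j
  rw [Pi.mul_apply, vecT, liftH, liftB, dft_sum, dft_sum, dft_sum, Finset.sum_mul_sum]
  rw [Finset.sum_congr rfl fun a _ => dft_sum _ _ _]
  refine Finset.sum_congr rfl fun a _ => Finset.sum_congr rfl fun b _ => ?_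
  rw [dft_smul, dft_smul, dft_smul, dft_single, dft_single, dft_single, pow_add]
  ring

lemma dft_e0 {n μ : ℕ} [NeZero n] [NeZero μ] :
    dft (liftH n (Pi.single (0 : Fin μ) (1 : ℂ))) = 1 := by
  funext j
  rw [liftH, dft_sum]
  rw [Finset.sum_congr rfl fun k _ => by rw [dft_smul, dft_single]]
  simp [Pi.single_apply]

theorem stmt2' {n μ : ℕ} [NeZero n] [NeZero μ] (h : Fin μ → ℂ) (βA βB : Fin n → ℂ) :
    dft (vecT h βB) * dft (vecT (Pi.single (0 : Fin μ) (1 : ℂ)) βA) =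
        dft (liftH n h) * dft (liftB μ βA) * dft (liftB μ βB) ∧
      dft (vecT h βA) * dft (vecT (Pi.single (0 : Fin μ) (1 : ℂ)) βB) =
        dft (liftH n h) * dft (liftB μ βA) * dft (liftB μ βB) := by
  constructor <;>
  · rw [dft_vecT, dft_vecT, dft_e0, one_mul]
    try ring

/-- Alice's and Bob's secrets coincide:
`DFT(vec(h ⊗ β_B)) · DFT(vec(e_0^μ ⊗ β_A)) = DFT(vec(h ⊗ β_A)) · DFT(vec(e_0^μ ⊗ β_B))`,
both equal to `DFT(h^⇑) · DFT(β_A^↑) · DFT(β_B^↑)` (pointwise products in `ℂ^{nμ}`). -/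
theorem stmt2 {n μ : ℕ} [NeZero n] [NeZero μ] (h : Fin μ → ℂ) (βA βB : Fin n → ℂ) :
    dft (vecT h βB) * dft (vecT (Pi.single (0 : Fin μ) (1 : ℂ)) βA) =
        dft (liftH n h) * dft (liftB μ βA) * dft (liftB μ βB) ∧
      dft (vecT h βA) * dft (vecT (Pi.single (0 : Fin μ) (1 : ℂ)) βB) =
        dft (liftH n h) * dft (liftB μ βA) * dft (liftB μ βB) := stmt2' h βA βB
end

section
/- Let Σ be a 2k-element subset of ℤ/n whose sumset Σ+Σ (mod n) has the maximal possible cardinality for unordered pairs. Let σ, σ' be k-element subsets of Σ with σ ≠ σ' and σ ≠ Σ∖σ'. Then there exist a₀, b₀ ∈ Σ with a₀ ≠ b₀ such that a₀ + b₀ lies in exactly one of the two sumsets σ + (Σ∖σ) and σ' + (Σ∖σ'), but not both. -/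
open Pointwise

/-- Given a `2k`-element set `T ⊆ ℤ/n` with maximal sumset (the map
`{a,b} ↦ a+b` is injective on unordered pairs of distinct elements of `T`),
and `k`-element subsets `σ ≠ σ'` of `T` with `σ ≠ T \ σ'`, there exist
`a₀ ≠ b₀` in `T` such that `a₀ + b₀` lies in exactly one of the sumsets
`σ + (T \ σ)` and `σ' + (T \ σ')`. -/
theorem stmt5 {n k : ℕ} [NeZero n] (T : Finset (ZMod n)) (hT : T.card = 2 * k)
    (hmax : ∀ a ∈ T, ∀ b ∈ T, ∀ c ∈ T, ∀ d ∈ T,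
      a ≠ b → c ≠ d → a + b = c + d → ({a, b} : Finset (ZMod n)) = {c, d})
    (σ σ' : Finset (ZMod n)) (hσ : σ ⊆ T) (hσ' : σ' ⊆ T)
    (hc : σ.card = k) (hc' : σ'.card = k)
    (hne : σ ≠ σ') (hne2 : σ ≠ T \ σ') :
    ∃ a₀ ∈ T, ∃ b₀ ∈ T, a₀ ≠ b₀ ∧
      Xor' (a₀ + b₀ ∈ σ + (T \ σ)) (a₀ + b₀ ∈ σ' + (T \ σ')) := by
  -- find x ∈ σ \ σ'
  obtain ⟨x, hx⟩ : (σ \ σ').Nonempty := by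
    rw [Finset.sdiff_nonempty]
    intro hsub
    exact hne (Finset.eq_of_subset_of_card_le hsub (by omega))
  rw [Finset.mem_sdiff] at hx
  -- find y ∈ σ ∩ σ'
  obtain ⟨y, hy⟩ : (σ ∩ σ').Nonempty := by
    by_contra h
    rw [Finset.not_nonempty_iff_eq_empty, ← Finset.disjoint_iff_inter_eq_empty] at h
    have hu : σ ∪ σ' = T := by
      apply Finset.eq_of_subset_of_card_le (Finset.union_subset hσ hσ')
      rw [Finset.card_union_of_disjoint h]; omega
    apply hne2
    rw [← hu, Finset.union_sdiff_cancel_right h]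
  rw [Finset.mem_inter] at hy
  have hxT : x ∈ T := hσ hx.1
  have hyT : y ∈ T := hσ hy.1
  have hxy : x ≠ y := fun h => hx.2 (h ▸ hy.2)
  refine ⟨x, hxT, y, hyT, hxy, Or.inr ⟨?_, ?_⟩⟩
  · -- x + y ∈ σ' + (T \ σ')
    rw [add_comm x y]
    exact Finset.add_mem_add hy.2 (Finset.mem_sdiff.mpr ⟨hxT, hx.2⟩)
  · -- x + y ∉ σ + (T \ σ)
    intro h
    rw [Finset.mem_add] at h
    obtain ⟨a, ha, b, hb, hab⟩ := h
    rw [Finset.mem_sdiff] at hb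
    have hane : a ≠ b := fun h => hb.2 (h ▸ ha)
    have := hmax a (hσ ha) b hb.1 x hxT y hyT hane hxy hab
    have hbm : b ∈ ({x, y} : Finset (ZMod n)) := this ▸ Finset.mem_insert_of_mem
      (Finset.mem_singleton_self b)
    rw [Finset.mem_insert, Finset.mem_singleton] at hbm
    rcases hbm with rfl | rfl
    · exact hb.2 hx.1
    · exact hb.2 hy.1
end

section
/- Let α₀,...,α_{2k−1} be i.i.d. uniform on [0,1] and let 0 ≤ δ < 1. Then P((1−δ)·max_{0≤i≤k−1} α_i ≤ min_{k≤i≤2k−1} α_i) = (k/(1−δ)^k)·∫₀^{1−δ} x^k (1−x)^{k−1} dx + δ^k. -/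
open MeasureTheory Set

section aux

lemma nu_Iic (t : ℝ) : (volume.restrict (Icc (0:ℝ) 1)) (Iic t) = ENNReal.ofReal (min t 1) := by
  rw [Measure.restrict_apply measurableSet_Iic]
  have : Iic t ∩ Icc (0:ℝ) 1 = Icc 0 (min t 1) := by
    ext x
    simp only [mem_inter_iff, mem_Iic, mem_Icc, le_min_iff]
    tauto
  rw [this, Real.volume_Icc]
  simp

lemma nu_Ici {c : ℝ} (hc : 0 ≤ c) :
    (volume.restrict (Icc (0:ℝ) 1)) (Ici c) = ENNReal.ofReal (1 - c) := by
  rw [Measure.restrict_apply measurableSet_Ici]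
  have : Ici c ∩ Icc (0:ℝ) 1 = Icc c 1 := by
    ext x
    simp only [mem_inter_iff, mem_Ici, mem_Icc]
    constructor <;> intro h
    · exact ⟨h.1, h.2.2⟩
    · exact ⟨h.1, le_trans hc h.1, h.2⟩
  rw [this, Real.volume_Icc]

instance : IsProbabilityMeasure (volume.restrict (Icc (0:ℝ) 1)) := by
  constructor
  simp [Real.volume_Icc]

variable {ι : Type*} [Fintype ι] [Nonempty ι]

lemma measurable_sup' : Measurable (fun x : ι → ℝ => ⨆ i, x i) :=
  Measurable.iSup (fun i => measurable_pi_apply i)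

lemma map_sup (hn : 0 < Fintype.card ι) :
    (Measure.pi fun _ : ι => volume.restrict (Icc (0:ℝ) 1)).map (fun x => ⨆ i, x i)
      = volume.withDensity ((Icc (0:ℝ) 1).indicator
          fun t => ENNReal.ofReal ((Fintype.card ι : ℝ) * t ^ (Fintype.card ι - 1))) := by
  set n := Fintype.card ι with hn'
  apply MeasureTheory.Measure.ext_of_Iic
  intro t
  rw [Measure.map_apply measurable_sup' measurableSet_Iic]
  have hpre : (fun x : ι → ℝ => ⨆ i, x i) ⁻¹' (Iic t) = Set.pi univ (fun _ => Iic t) := by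
    ext x
    simp only [mem_preimage, mem_Iic, mem_pi, mem_univ, forall_true_left]
    exact ciSup_le_iff (Set.Finite.bddAbove (finite_range x))
  rw [hpre, Measure.pi_pi]
  simp only [nu_Iic, Finset.prod_const, Finset.card_univ, ← hn']
  rw [withDensity_apply _ measurableSet_Iic,
    setLIntegral_indicator measurableSet_Icc]
  have hset : Icc (0:ℝ) 1 ∩ Iic t = Icc 0 (min t 1) := by
    ext x
    simp only [mem_inter_iff, mem_Iic, mem_Icc, le_min_iff]
    tauto
  rw [hset]
  rcases lt_or_ge (min t 1) 0 with hm | hm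
  · rw [Icc_eq_empty (by linarith), Measure.restrict_empty, lintegral_zero_measure]
    rw [ENNReal.ofReal_of_nonpos hm.le, zero_pow hn.ne']
  · have hcont : ContinuousOn (fun s : ℝ => (n:ℝ) * s ^ (n-1)) (Icc 0 (min t 1)) := by
      fun_prop
    rw [← ofReal_integral_eq_lintegral_ofReal
        (hcont.integrableOn_Icc)
        ((ae_restrict_iff' measurableSet_Icc).2 (ae_of_all _ (fun s hs => by
          have : (0:ℝ) ≤ s := hs.1
          positivity)))]
    rw [← ENNReal.ofReal_pow hm]
    congr 1
    rw [integral_Icc_eq_integral_Ioc, ← intervalIntegral.integral_of_le hm]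
    have : (∫ s in (0:ℝ)..(min t 1), (n:ℝ) * s^(n-1))
        = (n:ℝ) * ∫ s in (0:ℝ)..(min t 1), s^(n-1) := intervalIntegral.integral_const_mul _ _
    rw [this, integral_pow]
    have h1 : n - 1 + 1 = n := Nat.succ_pred_eq_of_pos hn
    rw [h1]
    field_simp
    rw [zero_pow hn.ne', Nat.cast_sub hn, Nat.cast_one]
    ring

lemma lint_sup (hn : 0 < Fintype.card ι) {g : ℝ → ENNReal} (hg : Measurable g) :
    (∫⁻ x, g (⨆ i, x i) ∂(Measure.pi fun _ : ι => volume.restrict (Icc (0:ℝ) 1)))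
      = ∫⁻ t in Icc (0:ℝ) 1,
          ENNReal.ofReal ((Fintype.card ι : ℝ) * t ^ (Fintype.card ι - 1)) * g t := by
  rw [← lintegral_map hg measurable_sup', map_sup hn,
    withDensity_indicator measurableSet_Icc,
    lintegral_withDensity_eq_lintegral_mul _ (by fun_prop) hg]
  rfl

lemma parts {k : ℕ} (hk : 0 < k) {b : ℝ} :
    (∫ u in (0:ℝ)..b, ((k:ℝ) * u^(k-1) * (1-u)^k - (k:ℝ) * u^k * (1-u)^(k-1)))
      = b^k * (1-b)^k := by
  have h : ∀ u : ℝ, HasDerivAt (fun u : ℝ => u^k * (1-u)^k)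
      ((k:ℝ) * u^(k-1) * (1-u)^k - (k:ℝ) * u^k * (1-u)^(k-1)) u := by
    intro u
    have h1 : HasDerivAt (fun u : ℝ => u^k) ((k:ℝ) * u^(k-1)) u := hasDerivAt_pow k u
    have h2 : HasDerivAt (fun u : ℝ => (1-u)^k) (-((k:ℝ) * (1-u)^(k-1))) u := by
      have := ((hasDerivAt_pow k (1-u)).comp u ((hasDerivAt_const u (1:ℝ)).sub (hasDerivAt_id u)))
      exact this.congr_deriv (by ring)
    have := h1.mul h2
    exact this.congr_deriv (by ring)
  have hi : IntervalIntegrable (fun u : ℝ =>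
      ((k:ℝ) * u^(k-1) * (1-u)^k - (k:ℝ) * u^k * (1-u)^(k-1))) volume 0 b := by
    apply Continuous.intervalIntegrable
    continuity
  rw [intervalIntegral.integral_eq_sub_of_hasDerivAt (fun u _ => h u) hi]
  simp [zero_pow hk.ne']

lemma calcsub {k : ℕ} (hk : 0 < k) {δ : ℝ} (hδ1 : δ < 1) :
    (∫ t in (0:ℝ)..1, (k:ℝ) * t^(k-1) * (1-(1-δ)*t)^k)
      = ((k:ℝ)/(1-δ)^k) * ∫ u in (0:ℝ)..(1-δ), u^(k-1) * (1-u)^k := by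
  have hc : (1:ℝ) - δ ≠ 0 := by linarith
  have key := intervalIntegral.integral_comp_mul_left
      (a := (0:ℝ)) (b := 1) (fun u => (k:ℝ) * (u/(1-δ))^(k-1) * (1-u)^k) hc
  have h1 : (∫ t in (0:ℝ)..1, (k:ℝ) * t^(k-1) * (1-(1-δ)*t)^k)
      = ∫ t in (0:ℝ)..1, (k:ℝ) * ((1-δ)*t/(1-δ))^(k-1) * (1-(1-δ)*t)^k := by
    apply intervalIntegral.integral_congr
    intro t _
    dsimp only
    rw [mul_div_cancel_left₀ _ hc]
  rw [h1, key]
  simp only [mul_zero, mul_one, smul_eq_mul]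
  rw [← intervalIntegral.integral_const_mul]
  have h2 : (∫ u in (0:ℝ)..(1-δ), (1-δ)⁻¹ * ((k:ℝ) * (u/(1-δ))^(k-1) * (1-u)^k))
      = ∫ u in (0:ℝ)..(1-δ), ((k:ℝ)/(1-δ)^k) * (u^(k-1) * (1-u)^k) := by
    apply intervalIntegral.integral_congr
    intro u _
    dsimp only
    rw [div_pow]
    field_simp
    have hpow : (1-δ) * (1-δ)^(k-1) = (1-δ)^k := by
      rw [← pow_succ']
      congr 1
      omega
    rw [← hpow]
    ring
  rw [h2, intervalIntegral.integral_const_mul]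

lemma calc1 {k : ℕ} (hk : 0 < k) {δ : ℝ} (hδ0 : 0 ≤ δ) (hδ1 : δ < 1) :
    (∫ t in (0:ℝ)..1, (k:ℝ) * t^(k-1) * (1-(1-δ)*t)^k)
      = ((k : ℝ) / (1 - δ) ^ k) * (∫ x in (0 : ℝ)..(1 - δ), x ^ k * (1 - x) ^ (k - 1)) + δ ^ k := by
  have hc : (0:ℝ) < 1 - δ := by linarith
  have hck : (0:ℝ) < (1-δ)^k := pow_pos hc k
  rw [calcsub hk hδ1]
  have hp := parts hk (b := 1-δ)
  have hi1 : IntervalIntegrable (fun u : ℝ => (k:ℝ) * u^(k-1) * (1-u)^k) volume 0 (1-δ) := by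
    apply Continuous.intervalIntegrable; continuity
  have hi2 : IntervalIntegrable (fun u : ℝ => (k:ℝ) * u^k * (1-u)^(k-1)) volume 0 (1-δ) := by
    apply Continuous.intervalIntegrable; continuity
  rw [intervalIntegral.integral_sub hi1 hi2] at hp
  have e1 : (∫ u in (0:ℝ)..(1-δ), (k:ℝ) * u^(k-1) * (1-u)^k)
      = (k:ℝ) * ∫ u in (0:ℝ)..(1-δ), u^(k-1) * (1-u)^k := by
    rw [← intervalIntegral.integral_const_mul]
    apply intervalIntegral.integral_congr
    intro u _; dsimp only; ring
  have e2 : (∫ u in (0:ℝ)..(1-δ), (k:ℝ) * u^k * (1-u)^(k-1))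
      = (k:ℝ) * ∫ u in (0:ℝ)..(1-δ), u^k * (1-u)^(k-1) := by
    rw [← intervalIntegral.integral_const_mul]
    apply intervalIntegral.integral_congr
    intro u _; dsimp only; ring
  rw [e1, e2] at hp
  have h1δ : (1:ℝ) - (1 - δ) = δ := by ring
  rw [h1δ] at hp
  have hckne : ((1:ℝ)-δ)^k ≠ 0 := hck.ne'
  field_simp
  linear_combination hp

end aux

/-- For `α₀,...,α_{2k-1}` i.i.d. uniform on `[0,1]` and `0 ≤ δ < 1`,
`P((1-δ)·max_{0 ≤ i ≤ k-1} α_i ≤ min_{k ≤ i ≤ 2k-1} α_i)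
  = (k/(1-δ)^k)·∫₀^{1-δ} x^k (1-x)^{k-1} dx + δ^k`. -/
theorem stmt9 {k : ℕ} (hk : 0 < k) {δ : ℝ} (hδ0 : 0 ≤ δ) (hδ1 : δ < 1) :
    (Measure.pi fun _ : Fin (2 * k) => volume.restrict (Set.Icc (0 : ℝ) 1))
        {α | (1 - δ) * (⨆ i : {j : Fin (2 * k) // (j : ℕ) < k}, α i.1) ≤
          ⨅ i : {j : Fin (2 * k) // k ≤ (j : ℕ)}, α i.1}
      = ENNReal.ofReal
          (((k : ℝ) / (1 - δ) ^ k) * (∫ x in (0 : ℝ)..(1 - δ), x ^ k * (1 - x) ^ (k - 1))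
            + δ ^ k) := by
  classical
  set p : Fin (2*k) → Prop := fun j => (j:ℕ) < k with hp
  haveI h1 : Nonempty {j : Fin (2*k) // p j} := ⟨⟨⟨0, by omega⟩, by simpa [p] using hk⟩⟩
  haveI h2 : Nonempty {j : Fin (2*k) // ¬ p j} := ⟨⟨⟨k, by omega⟩, by simp [p]⟩⟩
  have card1 : Fintype.card {j : Fin (2*k) // p j} = k := by
    refine (Fintype.card_congr ?_).trans (Fintype.card_fin k)
    exact { toFun := fun j => ⟨j.1.1, j.2⟩
            invFun := fun i => ⟨⟨i.1, by omega⟩, by simpa [p] using i.2⟩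
            left_inv := fun j => by ext; rfl
            right_inv := fun i => by ext; rfl }
  have card2 : Fintype.card {j : Fin (2*k) // ¬ p j} = k := by
    refine (Fintype.card_congr ?_).trans (Fintype.card_fin k)
    exact { toFun := fun j => ⟨j.1.1 - k, by have := j.1.2; have := j.2; simp [p] at this; omega⟩
            invFun := fun i => ⟨⟨i.1 + k, by omega⟩, by simp [p]⟩
            left_inv := fun j => by
              ext
              have := j.2; simp [p] at this
              simp [Nat.sub_add_cancel this]
            right_inv := fun i => by ext; simp }
  have hmp := measurePreserving_piEquivPiSubtypeProd
    (fun _ : Fin (2*k) => volume.restrict (Icc (0:ℝ) 1)) p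
  set e := MeasurableEquiv.piEquivPiSubtypeProd (fun _ : Fin (2*k) => ℝ) p with he
  set μ₁ := Measure.pi fun _ : {j : Fin (2*k) // p j} => volume.restrict (Icc (0:ℝ) 1) with hμ₁
  set μ₂ := Measure.pi fun _ : {j : Fin (2*k) // ¬ p j} => volume.restrict (Icc (0:ℝ) 1) with hμ₂
  set T : Set (({j : Fin (2*k) // p j} → ℝ) × ({j : Fin (2*k) // ¬ p j} → ℝ)) :=
    {z | (1-δ) * (⨆ i, z.1 i) ≤ ⨅ i, z.2 i} with hTdef
  have hT : MeasurableSet T := by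
    apply measurableSet_le
    · exact measurable_const.mul (measurable_sup'.comp measurable_fst)
    · exact (Measurable.iInf (fun i => measurable_pi_apply i)).comp measurable_snd
  have hinf : ∀ α : Fin (2*k) → ℝ,
      (⨅ i : {j : Fin (2*k) // k ≤ (j:ℕ)}, α i.1) = ⨅ i : {j : Fin (2*k) // ¬ p j}, α i.1 := by
    intro α
    rw [iInf, iInf]
    congr 1
    ext r
    simp only [mem_range, Subtype.exists, p, not_lt]
  have hS : {α : Fin (2*k) → ℝ | (1 - δ) * (⨆ i : {j : Fin (2 * k) // (j : ℕ) < k}, α i.1) ≤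
          ⨅ i : {j : Fin (2 * k) // k ≤ (j : ℕ)}, α i.1} = e ⁻¹' T := by
    ext α
    simp only [mem_preimage, mem_setOf_eq, hTdef, he,
      MeasurableEquiv.piEquivPiSubtypeProd, Equiv.piEquivPiSubtypeProd]
    rw [hinf α]
    rfl
  rw [hS, hmp.measure_preimage hT.nullMeasurableSet, Measure.prod_apply hT]
  set g : ℝ → ENNReal := fun t => ENNReal.ofReal ((1-(1-δ)*t)^k) with hgdef
  have hg : Measurable g := by fun_prop
  have hae : ∀ᵐ x ∂μ₁, μ₂ (Prod.mk x ⁻¹' T) = g (⨆ i, x i) := by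
    have hmem : ∀ᵐ x ∂μ₁, ∀ i, x i ∈ Icc (0:ℝ) 1 := by
      rw [ae_all_iff]
      intro i
      exact Measure.tendsto_eval_ae_ae.eventually (ae_restrict_mem measurableSet_Icc)
    filter_upwards [hmem] with x hx
    have hbdd := Set.Finite.bddAbove (finite_range x)
    obtain ⟨i₀⟩ := id h1
    have hs0 : 0 ≤ ⨆ i, x i := le_trans (hx i₀).1 (le_ciSup hbdd i₀)
    have hs1 : (⨆ i, x i) ≤ 1 := ciSup_le (fun i => (hx i).2)
    have hc0 : 0 ≤ (1-δ) * ⨆ i, x i := mul_nonneg (by linarith) hs0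
    have hc1 : (1-δ) * (⨆ i, x i) ≤ 1 := by nlinarith
    have hpre : Prod.mk x ⁻¹' T
        = Set.pi univ (fun _ : {j : Fin (2*k) // ¬ p j} => Ici ((1-δ) * ⨆ i, x i)) := by
      ext y
      simp only [hTdef, mem_preimage, mem_setOf_eq, mem_pi, mem_univ, forall_true_left, mem_Ici]
      exact le_ciInf_iff (Set.Finite.bddBelow (finite_range y))
    rw [hpre, hμ₂, Measure.pi_pi]
    simp only [nu_Ici hc0, Finset.prod_const, Finset.card_univ, card2]
    rw [← ENNReal.ofReal_pow (by linarith), hgdef]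
  rw [lintegral_congr_ae hae, hμ₁, lint_sup (by rw [card1]; exact hk) hg, card1]
  have hcomb : ∀ᵐ t ∂(volume.restrict (Icc (0:ℝ) 1)),
      ENNReal.ofReal ((k:ℝ) * t^(k-1)) * g t
        = ENNReal.ofReal ((k:ℝ) * t^(k-1) * (1-(1-δ)*t)^k) := by
    refine (ae_restrict_iff' measurableSet_Icc).2 (ae_of_all _ (fun t ht => ?_))
    rw [hgdef, ← ENNReal.ofReal_mul]
    have : (0:ℝ) ≤ t := ht.1
    positivity
  rw [lintegral_congr_ae hcomb]
  have hint : IntegrableOn (fun t : ℝ => (k:ℝ) * t^(k-1) * (1-(1-δ)*t)^k) (Icc 0 1) volume := by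
    apply ContinuousOn.integrableOn_Icc
    fun_prop
  have hnn : 0 ≤ᵐ[volume.restrict (Icc (0:ℝ) 1)]
      fun t : ℝ => (k:ℝ) * t^(k-1) * (1-(1-δ)*t)^k := by
    refine (ae_restrict_iff' measurableSet_Icc).2 (ae_of_all _ (fun t ht => ?_))
    have h1 : (0:ℝ) ≤ t := ht.1
    have h2 : (1-δ)*t ≤ 1 := by nlinarith [ht.2]
    have h3 : (0:ℝ) ≤ 1 - (1-δ)*t := by linarith
    positivity
  rw [← ofReal_integral_eq_lintegral_ofReal hint hnn]
  congr 1
  rw [integral_Icc_eq_integral_Ioc, ← intervalIntegral.integral_of_le (by norm_num : (0:ℝ) ≤ 1)]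
  exact calc1 hk hδ0 hδ1
end

section
/- For 0 ≤ δ < 1 and k ≥ 1, the following integral bound holds: (k/(1−δ)^k)·∫₀^{1−δ} x^k (1−x)^{k−1} dx + δ^k ≤ binom(2k,k)^{-1}·(1−δ^{2k})/(1−δ)^k + δ^k. -/
open Finset intervalIntegral

private lemma ch1 (k j : ℕ) (hj : 1 ≤ j) :
    (2*k).choose j * j = 2*k * ((2*k-1).choose (j-1)) := by
  cases k with
  | zero =>
    have : Nat.choose 0 j = 0 := Nat.choose_eq_zero_of_lt (by omega)
    simp [this]
  | succ n =>
    obtain ⟨m, rfl⟩ : ∃ m, j = m + 1 := ⟨j-1, by omega⟩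
    have e1 : 2*(n+1)-1 = 2*n+1 := by omega
    have e2 : 2*(n+1) = 2*n+1+1 := by omega
    rw [e1, e2, Nat.add_sub_cancel]
    exact (Nat.add_one_mul_choose_eq (2*n+1) m).symm

private lemma ch2 (k j : ℕ) (hk : 1 ≤ k) (hj : j ≤ 2*k) :
    (2*k).choose j * (2*k - j) = 2*k * ((2*k-1).choose j) := by
  rcases eq_or_lt_of_le hj with rfl | hlt
  · have : (2*k-1).choose (2*k) = 0 := Nat.choose_eq_zero_of_lt (by omega)
    simp [this]
  · have h := ch1 k (2*k - j) (by omega)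
    rw [Nat.choose_symm hj] at h
    have e1 : 2*k - j - 1 = (2*k-1) - j := by omega
    rw [e1, Nat.choose_symm (by omega : j ≤ 2*k-1)] at h
    exact h

/-- telescoping sum over Ioc -/
private lemma telesc (g : ℕ → ℝ) (m n : ℕ) (h : m ≤ n) :
    ∑ j ∈ Ioc m n, (g (j-1) - g j) = g m - g n := by
  induction n with
  | zero =>
    have : m = 0 := by omega
    subst this; simp
  | succ n ih =>
    rcases eq_or_lt_of_le h with rfl | hlt
    · simp
    · have hm : m ≤ n := by omega
      rw [Finset.sum_Ioc_succ_top hm, ih hm, Nat.add_sub_cancel]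
      ring

noncomputable def Gf (k j : ℕ) (t : ℝ) : ℝ := ((2*k).choose j : ℝ) * (t^j * (1-t)^(2*k-j))
noncomputable def Ga (k j : ℕ) (t : ℝ) : ℝ := ((2*k-1).choose j : ℝ) * (t^j * (1-t)^(2*k-1-j))

private lemma hasDerivAt_Gf (k j : ℕ) (hk : 1 ≤ k) (hj1 : k+1 ≤ j) (hj2 : j ≤ 2*k) (t : ℝ) :
    HasDerivAt (Gf k j) ((2*k : ℝ) * (Ga k (j-1) t - Ga k j t)) t := by
  have h1 : HasDerivAt (fun t : ℝ => t ^ j) ((j:ℝ) * t^(j-1)) t := hasDerivAt_pow j t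
  have h2 : HasDerivAt (fun t : ℝ => (1-t)^(2*k-j))
      ((((2*k-j : ℕ)) : ℝ) * (1-t)^(2*k-j-1) * (-1)) t :=
    ((hasDerivAt_id t).const_sub 1).pow _
  have h3 := (h1.mul h2).const_mul (((2*k).choose j : ℝ))
  refine h3.congr_deriv ?_
  symm
  have c1 : ((2*k).choose j : ℝ) * (j:ℝ) = (2*k : ℝ) * (((2*k-1).choose (j-1) : ℕ) : ℝ) := by
    exact_mod_cast ch1 k j (by omega)
  have c2 : ((2*k).choose j : ℝ) * (((2*k - j : ℕ)) : ℝ)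
      = (2*k : ℝ) * (((2*k-1).choose j : ℕ) : ℝ) := by
    exact_mod_cast ch2 k j hk hj2
  have e1 : 2*k-1-(j-1) = 2*k-j := by omega
  have e2 : 2*k-j-1 = 2*k-1-j := by omega
  simp only [Ga, e1, e2]
  linear_combination -(t^(j-1)*(1-t)^(2*k-j)) * c1 + (t^j*(1-t)^(2*k-1-j)) * c2

noncomputable def GG (k : ℕ) (t : ℝ) : ℝ := ∑ j ∈ Ioc k (2*k), Gf k j t

private lemma hasDerivAt_GG (k : ℕ) (hk : 1 ≤ k) (t : ℝ) :
    HasDerivAt (GG k) (((k:ℝ) * ((2*k).choose k : ℝ)) * (t^k * (1-t)^(k-1))) t := by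
  have h : HasDerivAt (fun t => ∑ j ∈ Ioc k (2*k), Gf k j t)
      (∑ j ∈ Ioc k (2*k), (2*k : ℝ) * (Ga k (j-1) t - Ga k j t)) t :=
    HasDerivAt.fun_sum (fun j hj => by
      rw [Finset.mem_Ioc] at hj
      exact hasDerivAt_Gf k j hk (by omega) hj.2 t)
  have hG : HasDerivAt (GG k)
      (∑ j ∈ Ioc k (2*k), (2*k : ℝ) * (Ga k (j-1) t - Ga k j t)) t := h
  convert hG using 1
  rw [← Finset.mul_sum, telesc (fun j => Ga k j t) k (2*k) (by omega)]
  have hz : Ga k (2*k) t = 0 := by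
    have : (2*k-1).choose (2*k) = 0 := Nat.choose_eq_zero_of_lt (by omega)
    simp [Ga, this]
  simp only [hz, sub_zero]
  have c1 : ((2*k).choose k : ℝ) * (k:ℝ) = (2*k : ℝ) * (((2*k-1).choose k : ℕ) : ℝ) := by
    have h := ch1 k k (by omega)
    have e : (2*k-1).choose (k-1) = (2*k-1).choose k := by
      have := Nat.choose_symm (n := 2*k-1) (k := k) (by omega)
      rwa [show 2*k-1-k = k-1 by omega] at this
    rw [e] at h
    exact_mod_cast h
  have e1 : 2*k-1-k = k-1 := by omega
  simp only [Ga, e1]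
  linear_combination (t^k * (1-t)^(k-1)) * c1

/-- Integral bound:
`(k/(1-δ)^k)·∫₀^{1-δ} x^k (1-x)^{k-1} dx + δ^k
  ≤ binom(2k,k)⁻¹·(1-δ^{2k})/(1-δ)^k + δ^k` for `0 ≤ δ < 1` and `k ≥ 1`. -/
theorem stmt10 {k : ℕ} (hk : 1 ≤ k) {δ : ℝ} (hδ0 : 0 ≤ δ) (hδ1 : δ < 1) :
    ((k : ℝ) / (1 - δ) ^ k) * (∫ x in (0 : ℝ)..(1 - δ), x ^ k * (1 - x) ^ (k - 1)) + δ ^ k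
      ≤ ((Nat.choose (2 * k) k : ℝ))⁻¹ * (1 - δ ^ (2 * k)) / (1 - δ) ^ k + δ ^ k := by
  have hC : 0 < ((2*k).choose k : ℝ) := by
    exact_mod_cast Nat.choose_pos (by omega : k ≤ 2*k)
  have h1δ : (0:ℝ) < 1 - δ := by linarith
  have hP : (0:ℝ) < (1 - δ)^k := pow_pos h1δ k
  have hk0 : (0:ℝ) < (k:ℝ) := by exact_mod_cast hk
  set c : ℝ := (k:ℝ) * ((2*k).choose k : ℝ) with hc
  have hc0 : 0 < c := mul_pos hk0 hC
  -- integral evaluation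
  have hint : (∫ x in (0:ℝ)..(1-δ), c * (x^k * (1-x)^(k-1))) = GG k (1-δ) - GG k 0 := by
    apply intervalIntegral.integral_eq_sub_of_hasDerivAt
    · intro x _
      exact hasDerivAt_GG k hk x
    · apply Continuous.intervalIntegrable
      fun_prop
  have hG0 : GG k 0 = 0 := by
    apply Finset.sum_eq_zero
    intro j hj
    rw [Finset.mem_Ioc] at hj
    simp [Gf, zero_pow (by omega : j ≠ 0)]
  have hint2 : (∫ x in (0:ℝ)..(1-δ), x^k * (1-x)^(k-1)) = GG k (1-δ) / c := by
    rw [eq_div_iff hc0.ne', mul_comm]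
    rw [← intervalIntegral.integral_const_mul, hint, hG0, sub_zero]
  -- bound on GG
  have hbinom : ∑ j ∈ range (2*k+1), ((2*k).choose j : ℝ) * ((1-δ)^j * δ^(2*k-j)) = 1 := by
    calc ∑ j ∈ range (2*k+1), ((2*k).choose j : ℝ) * ((1-δ)^j * δ^(2*k-j))
        = ∑ j ∈ range (2*k+1), (1-δ)^j * δ^(2*k-j) * ((2*k).choose j : ℝ) := by
          apply Finset.sum_congr rfl; intro i _; ring
      _ = ((1-δ) + δ)^(2*k) := (add_pow (1-δ) δ (2*k)).symm
      _ = 1 := by norm_num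
  have hGle : GG k (1-δ) ≤ 1 - δ^(2*k) := by
    have hsub : Ioc k (2*k) ⊆ (range (2*k+1)).erase 0 := by
      intro j hj
      rw [Finset.mem_Ioc] at hj
      rw [Finset.mem_erase, Finset.mem_range]
      omega
    have hGG : GG k (1-δ) = ∑ j ∈ Ioc k (2*k), ((2*k).choose j : ℝ) * ((1-δ)^j * δ^(2*k-j)) := by
      simp only [GG, Gf, sub_sub_cancel]
    have hle : GG k (1-δ) ≤ ∑ j ∈ (range (2*k+1)).erase 0, ((2*k).choose j : ℝ) * ((1-δ)^j * δ^(2*k-j)) := by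
      rw [hGG]
      apply Finset.sum_le_sum_of_subset_of_nonneg hsub
      intro i _ _
      positivity
    rw [Finset.sum_erase_eq_sub (by simp : (0:ℕ) ∈ range (2*k+1)), hbinom] at hle
    simpa using hle
  -- conclude
  have key : (k:ℝ) * (∫ x in (0:ℝ)..(1-δ), x^k * (1-x)^(k-1))
      ≤ ((2*k).choose k : ℝ)⁻¹ * (1 - δ^(2*k)) := by
    rw [hint2]
    rw [hc, div_eq_mul_inv, mul_inv]
    calc (k:ℝ) * (GG k (1-δ) * ((k:ℝ)⁻¹ * (((2*k).choose k : ℝ))⁻¹))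
        = ((2*k).choose k : ℝ)⁻¹ * GG k (1-δ) := by
          field_simp
      _ ≤ ((2*k).choose k : ℝ)⁻¹ * (1 - δ^(2*k)) := by
          apply mul_le_mul_of_nonneg_left hGle (by positivity)
  gcongr ?_ + _
  rw [div_mul_eq_mul_div]
  exact (div_le_div_iff_of_pos_right hP).mpr key
end
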